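/- On the 2-dimensional module W_k with basis {u_k := v∧w^{k-1}, x_k := w^k}, the composition M_{k,l} ∘ M'_{k,l} of the comultiplication M'_{k,l} : W_{k+l} → W_k ⊗ W_l followed by the multiplication M_{k,l} : W_k ⊗ W_l → W_{k+l} equals [k+l choose l]_q times the identity of W_{k+l}. -/

import Mathlib

open Matrix
open scoped Kronecker

noncomputable section

/-- The quantum integer `[n] = (q^n - q^{-n})/(q - q⁻¹)`. -/
def qint {K : Type*} [Field K] (q : K) (n : ℤ) : K :=
  (q ^ n - q ^ (-n)) / (q - q⁻¹)

/-- The quantum factorial `[n]! = [n][n-1]⋯[1]`. -/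
def qfact {K : Type*} [Field K] (q : K) : ℕ → K
  | 0 => 1
  | n + 1 => qint q (n + 1) * qfact q n

/-- The quantum binomial coefficient `[n choose k] = [n]!/([k]![n-k]!)` (zero if `k > n`). -/
def qbinom {K : Type*} [Field K] (q : K) (n k : ℕ) : K :=
  if k ≤ n then qfact q n / (qfact q k * qfact q (n - k)) else 0

/-- The matrix of the multiplication map `M_{k,l} : W_k ⊗ W_l → W_{k+l}` in the
bases `(u, x)` (index `0 = u = v∧w^{i-1}`, `1 = x = w^i`):
`M(x_k⊗x_l) = x_{k+l}`, `M(u_k⊗x_l) = u_{k+l}`, `M(x_k⊗u_l) = (-q)^k u_{k+l}`,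
`M(u_k⊗u_l) = 0`. -/
def Mmat {K : Type*} [Field K] (q : K) (k : ℕ) : Matrix (Fin 2) (Fin 2 × Fin 2) K :=
  single 0 (0, 1) 1 + single 0 (1, 0) ((-q) ^ k) +
    single 1 (1, 1) 1

/-- The matrix of the comultiplication map `M'_{k,l} : W_{k+l} → W_k ⊗ W_l`:
`M'(x_{k+l}) = [k+l choose k] x_k⊗x_l`,
`M'(u_{k+l}) = q^{-l}[k+l-1 choose l] u_k⊗x_l + (-1)^k [k+l-1 choose k] x_k⊗u_l`. -/
def M'mat {K : Type*} [Field K] (q : K) (k l : ℕ) : Matrix (Fin 2 × Fin 2) (Fin 2) K :=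
  single (0, 1) 0 (q ^ (-(l : ℤ)) * qbinom q (k + l - 1) l) +
    single (1, 0) 0 ((-1 : K) ^ k * qbinom q (k + l - 1) k) +
    single (1, 1) 1 (qbinom q (k + l) k)

/-- The matrix of the `R`-matrix on `C_q^{1|1} ⊗ C_q^{1|1}` in the basis `(v, w)`
(index `0 = v`, `1 = w`): `R(v⊗v) = q v⊗v`, `R(v⊗w) = (q-q⁻¹) v⊗w + w⊗v`,
`R(w⊗v) = v⊗w`, `R(w⊗w) = -q⁻¹ w⊗w`. -/
def Rmat {K : Type*} [Field K] (q : K) : Matrix (Fin 2 × Fin 2) (Fin 2 × Fin 2) K :=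
  single (0, 0) (0, 0) q + single (0, 1) (0, 1) (q - q⁻¹) +
    single (1, 0) (0, 1) 1 + single (0, 1) (1, 0) 1 +
    single (1, 1) (1, 1) (-q⁻¹)

section moyaux
variable {K : Type*} [Field K]


lemma qint_add (q : K) (hq : q ≠ 0) (a b : ℤ) :
    q ^ (-b) * qint q a + q ^ a * qint q b = qint q (a + b) := by
  rw [qint, qint, qint, ← mul_div_assoc, ← mul_div_assoc, ← add_div]
  congr 1
  rw [mul_sub, mul_sub, ← zpow_add₀ hq, ← zpow_add₀ hq, ← zpow_add₀ hq, ← zpow_add₀ hq,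
    neg_add, show -b + a = a + -b by ring, show -b + -a = -a + -b by ring]
  ring

lemma qfact_succ (q : K) (n : ℕ) : qfact q (n+1) = qint q (n+1) * qfact q n := rfl

lemma qfact_eq_zero_mono (q : K) {m M : ℕ} (h : m ≤ M) (h0 : qfact q m = 0) :
    qfact q M = 0 := by
  induction M, h using Nat.le_induction with
  | base => exact h0
  | succ n hn ih => rw [qfact_succ, ih, mul_zero]

lemma qbinom_symm (q : K) {n k : ℕ} (h : k ≤ n) : qbinom q n k = qbinom q n (n - k) := by
  rw [qbinom, qbinom, if_pos h, if_pos (Nat.sub_le n k), Nat.sub_sub_self h, mul_comm]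

lemma qpascal (q : K) (hq : q ≠ 0) {k l : ℕ} (hk : 1 ≤ k) (hl : 1 ≤ l) :
    q ^ (-(l:ℤ)) * qbinom q (k+l-1) l + q ^ k * qbinom q (k+l-1) k = qbinom q (k+l) l := by
  obtain ⟨a, rfl⟩ := Nat.exists_eq_add_of_le hk
  obtain ⟨b, rfl⟩ := Nat.exists_eq_add_of_le hl
  have e1 : 1 + a + (1 + b) - 1 = a + b + 1 := by omega
  have e2 : 1 + a + (1 + b) = a + b + 2 := by omega
  have e3 : a + b + 1 - (1 + b) = a := by omega
  have e4 : a + b + 1 - (1 + a) = b := by omega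
  have e5 : a + b + 2 - (1 + b) = a + 1 := by omega
  rw [e1, e2, qbinom, qbinom, qbinom, if_pos (by omega), if_pos (by omega), if_pos (by omega),
    e3, e4, e5]
  by_cases h0 : qfact q (a + b + 1) = 0
  · rw [h0, qfact_eq_zero_mono q (M := a + b + 2) (by omega) h0]
    simp
  · have hFa : qfact q a ≠ 0 := fun h => h0 (qfact_eq_zero_mono q (by omega) h)
    have hFb : qfact q b ≠ 0 := fun h => h0 (qfact_eq_zero_mono q (by omega) h)
    have hFa1 : qfact q (a+1) ≠ 0 := fun h => h0 (qfact_eq_zero_mono q (by omega) h)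
    have hFb1 : qfact q (b+1) ≠ 0 := fun h => h0 (qfact_eq_zero_mono q (by omega) h)
    have r1 : (1 + b : ℕ) = b + 1 := by omega
    have r2 : (1 + a : ℕ) = a + 1 := by omega
    rw [r1, r2, qfact_succ q (a+b+1), qfact_succ q a, qfact_succ q b]
    have hA : qint q (↑a+1) ≠ 0 := by
      intro h; apply hFa1; rw [qfact_succ]; push_cast [h]; ring
    have hB : qint q (↑b+1) ≠ 0 := by
      intro h; apply hFb1; rw [qfact_succ]; push_cast [h]; ring
    have key : q ^ (-((b:ℤ)+1)) * qint q ((a:ℤ)+1) + q ^ ((a:ℤ)+1) * qint q ((b:ℤ)+1)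
        = qint q (((a+b+1 : ℕ) : ℤ) + 1) := by
      rw [qint_add q hq]; congr 1; push_cast; ring
    have c1 : q ^ (-((b+1 : ℕ) : ℤ)) = q ^ (-((b:ℤ)+1)) := by push_cast; ring_nf
    have c2 : (q : K) ^ (a + 1 : ℕ) = q ^ ((a:ℤ)+1) := by
      rw [← zpow_natCast]; push_cast; ring_nf
    rw [c1, c2, ← key]
    rw [_root_.zpow_neg]
    have hqb : (q : K) ^ ((b:ℤ)+1) ≠ 0 := zpow_ne_zero _ hq
    rw [mul_div_assoc', mul_div_assoc',
      div_add_div _ _ (mul_ne_zero (mul_ne_zero hB hFb) hFa)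
        (mul_ne_zero (mul_ne_zero hA hFa) hFb),
      div_eq_div_iff
        (mul_ne_zero (mul_ne_zero (mul_ne_zero hB hFb) hFa)
          (mul_ne_zero (mul_ne_zero hA hFa) hFb))
        (mul_ne_zero (mul_ne_zero hB hFb) (mul_ne_zero hA hFa))]
    ring

end moyaux

/-- MOY Move 2: `M_{k,l} ∘ M'_{k,l} = [k+l choose l]·id` on `W_{k+l}`. -/
theorem moy_move2 {K : Type*} [Field K] (q : K) (hq : q ≠ 0)
    (hq' : q - q⁻¹ ≠ 0) (k l : ℕ) (hk : 1 ≤ k) (hl : 1 ≤ l) :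
    Mmat q k * M'mat q k l = qbinom q (k + l) l • (1 : Matrix (Fin 2) (Fin 2) K) := by
  ext i j
  fin_cases i <;> fin_cases j <;>
    simp [Mmat, M'mat, Matrix.mul_apply, Matrix.single, Fintype.sum_prod_type,
      Fin.sum_univ_succ, Matrix.one_apply]
  · rw [show (-q)^k * ((-1:K)^k * qbinom q (k+l-1) k) = q^k * qbinom q (k+l-1) k by
      rw [← mul_assoc, ← mul_pow]; ring_nf]
    rw [show ((q:K)^l)⁻¹ = q ^ (-(l:ℤ)) by rw [_root_.zpow_neg, zpow_natCast]]
    exact qpascal q hq hk hl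
  · rw [qbinom_symm q (show k ≤ k + l by omega)]
    congr 1
    omega
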